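/- Let Y be a closed subspace of a real Banach space X with property-(SU), i.e., Y# = {x* ∈ X* : ‖x*‖ = ‖x*|_Y‖} is a linear subspace and X* = Y# ⊕ Y⊥ with ‖y# + y⊥‖ > ‖y#‖ whenever y⊥ ≠ 0. Then Y⊥ is a Chebyshev subspace of X* and the metric projection P_{Y⊥} : X* → Y⊥ is a linear projection. -/

import Mathlib

open NormedSpace Metric Set

namespace Paper

variable {X : Type*} [NormedAddCommGroup X] [NormedSpace ℝ X]

/-- The restriction of a continuous linear functional to a subspace. -/
noncomputable def restr (Y : Submodule ℝ X) (f : StrongDual ℝ X) : StrongDual ℝ ↥Y :=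
  f.comp Y.subtypeL

/-- The annihilator `Y⊥` of a subspace `Y` in the dual. -/
def ann (Y : Submodule ℝ X) : Set (StrongDual ℝ X) := {f | ∀ y ∈ Y, f y = 0}

/-- The set of norm-preserving (Hahn–Banach) extensions of `g : Y* ` to `X`. -/
def HB (Y : Submodule ℝ X) (g : StrongDual ℝ ↥Y) : Set (StrongDual ℝ X) :=
  {f | (∀ y : Y, f (y : X) = g y) ∧ ‖f‖ = ‖g‖}

/-- Best approximations to `x` from a set `A`. -/
def bestApprox {E : Type*} [NormedAddCommGroup E] (A : Set E) (x : E) : Set E :=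
  {z ∈ A | ‖x - z‖ = infDist x A}

/-- Property-(U): every functional on `Y` has a unique norm-preserving extension to `X`. -/
def propU (Y : Submodule ℝ X) : Prop :=
  ∀ g : StrongDual ℝ ↥Y, ∃! f : StrongDual ℝ X, f ∈ HB Y g

/-- `Y# `: the set of functionals whose norm equals the norm of their restriction to `Y`. -/
def sharp (Y : Submodule ℝ X) : Set (StrongDual ℝ X) := {f | ‖f‖ = ‖restr Y f‖}

/-- Property-(HB), stated via the decomposition `X* = Y# ⊕ Y⊥`. -/
def propHB (Y : Submodule ℝ X) : Prop :=
  (∀ f ∈ sharp Y, ∀ g ∈ sharp Y, f + g ∈ sharp Y) ∧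
  (∀ (c : ℝ), ∀ f ∈ sharp Y, c • f ∈ sharp Y) ∧
  (∀ f : StrongDual ℝ X, ∃ g ∈ sharp Y, ∃ h ∈ ann Y, f = g + h) ∧
  (∀ g ∈ sharp Y, ∀ h ∈ ann Y, h ≠ 0 → ‖g‖ < ‖g + h‖ ∧ ‖h‖ ≤ ‖g + h‖)

end Paper

open Paper

/-- if `Y` has property-(SU) in `X`, i.e. `Y#` is a linear subspace,
`X* = Y# ⊕ Y⊥`, and `‖g + h‖ > ‖g‖` for `g ∈ Y#`, `0 ≠ h ∈ Y⊥`, then `Y⊥` is Chebyshev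
in `X*` and the metric projection onto `Y⊥` is a linear projection. -/
theorem stmt5 {X : Type*} [NormedAddCommGroup X] [NormedSpace ℝ X] [CompleteSpace X]
    (Y : Submodule ℝ X) (hYc : IsClosed (Y : Set X))
    (hadd : ∀ f ∈ sharp Y, ∀ g ∈ sharp Y, f + g ∈ sharp Y)
    (hsmul : ∀ (c : ℝ), ∀ f ∈ sharp Y, c • f ∈ sharp Y)
    (hdec : ∀ f : StrongDual ℝ X, ∃ g ∈ sharp Y, ∃ h ∈ ann Y, f = g + h)
    (hstrict : ∀ g ∈ sharp Y, ∀ h ∈ ann Y, h ≠ 0 → ‖g‖ < ‖g + h‖) :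
    ∃ P : StrongDual ℝ X →ₗ[ℝ] StrongDual ℝ X,
      ∀ f : StrongDual ℝ X, bestApprox (ann Y) f = {P f} := by
  classical
  have annsub : ∀ h₁ ∈ ann Y, ∀ h₂ ∈ ann Y, h₁ - h₂ ∈ ann Y := by
    intro h₁ H1 h₂ H2 y hy
    simp [ContinuousLinearMap.sub_apply, H1 y hy, H2 y hy]
  have annadd : ∀ h₁ ∈ ann Y, ∀ h₂ ∈ ann Y, h₁ + h₂ ∈ ann Y := by
    intro h₁ H1 h₂ H2 y hy
    simp [ContinuousLinearMap.add_apply, H1 y hy, H2 y hy]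
  have annsmul : ∀ (c : ℝ), ∀ h ∈ ann Y, c • h ∈ ann Y := by
    intro c h H y hy
    simp [ContinuousLinearMap.smul_apply, H y hy]
  -- sharp ∩ ann = {0}
  have key : ∀ k ∈ sharp Y, k ∈ ann Y → k = 0 := by
    intro k hk hk'
    have hr : restr Y k = 0 := by
      ext y
      exact hk' y y.2
    have : ‖k‖ = 0 := by rw [hk, hr]; exact ContinuousLinearMap.opNorm_zero
    exact norm_eq_zero.mp this
  have hdec' : ∀ f : StrongDual ℝ X, ∃ h, h ∈ ann Y ∧ f - h ∈ sharp Y := by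
    intro f
    obtain ⟨g, hg, h, hh, rfl⟩ := hdec f
    exact ⟨h, hh, by simpa using hg⟩
  set Pf : StrongDual ℝ X → StrongDual ℝ X := fun f => (hdec' f).choose with hPf
  have hP : ∀ f, Pf f ∈ ann Y ∧ f - Pf f ∈ sharp Y := fun f => (hdec' f).choose_spec
  -- uniqueness of decomposition
  have uniq : ∀ f h, h ∈ ann Y → f - h ∈ sharp Y → h = Pf f := by
    intro f h hh hs
    have hk : (Pf f - h) ∈ ann Y := annsub _ (hP f).1 _ hh
    have hk' : (f - h) + (-1 : ℝ) • (f - Pf f) ∈ sharp Y :=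
      hadd _ hs _ (hsmul (-1) _ (hP f).2)
    have hsharp : (Pf f - h) ∈ sharp Y := by
      have he : (f - h) + (-1 : ℝ) • (f - Pf f) = Pf f - h := by
        module
      rwa [he] at hk'
    have := key _ hsharp hk
    exact (sub_eq_zero.mp this).symm
  have hmapadd : ∀ f₁ f₂, Pf (f₁ + f₂) = Pf f₁ + Pf f₂ := by
    intro f₁ f₂
    refine (uniq (f₁ + f₂) (Pf f₁ + Pf f₂) (annadd _ (hP f₁).1 _ (hP f₂).1) ?_).symm
    have he : (f₁ + f₂) - (Pf f₁ + Pf f₂) = (f₁ - Pf f₁) + (f₂ - Pf f₂) := by abel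
    rw [he]
    exact hadd _ (hP f₁).2 _ (hP f₂).2
  have hmapsmul : ∀ (c : ℝ) f, Pf (c • f) = c • Pf f := by
    intro c f
    refine (uniq (c • f) (c • Pf f) (annsmul c _ (hP f).1) ?_).symm
    have he : c • f - c • Pf f = c • (f - Pf f) := by
      rw [smul_sub]
    rw [he]
    exact hsmul c _ (hP f).2
  refine ⟨{ toFun := Pf, map_add' := hmapadd, map_smul' := hmapsmul }, ?_⟩
  intro f
  have hann := (hP f).1
  have hsharp := (hP f).2
  set g : StrongDual ℝ X := f - Pf f with hg
  -- infDist f (ann Y) = ‖g‖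
  have hlb : ∀ z ∈ ann Y, ‖g‖ ≤ ‖f - z‖ := by
    intro z hz
    by_cases hzz : Pf f - z = 0
    · have hz' : z = Pf f := (sub_eq_zero.mp hzz).symm
      rw [hz', ← hg]
    · have := hstrict g hsharp (Pf f - z) (annsub _ hann _ hz) hzz
      have he : g + (Pf f - z) = f - z := by rw [hg]; abel
      rw [he] at this
      exact le_of_lt this
  have hinf : infDist f (ann Y) = ‖g‖ := by
    apply le_antisymm
    · have : dist f (Pf f) = ‖g‖ := by rw [dist_eq_norm, hg]
      calc infDist f (ann Y) ≤ dist f (Pf f) := infDist_le_dist_of_mem hann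
        _ = ‖g‖ := this
    · by_contra hlt
      push_neg at hlt
      obtain ⟨z, hz, hdz⟩ := (infDist_lt_iff ⟨Pf f, hann⟩).mp hlt
      rw [dist_eq_norm] at hdz
      exact absurd hdz (not_lt.mpr (hlb z hz))
  ext z
  simp only [bestApprox, Set.mem_setOf_eq, Set.mem_singleton_iff]
  constructor
  · rintro ⟨hz, hnorm⟩
    by_contra hne
    have hzz : Pf f - z ≠ 0 := fun hc => hne (sub_eq_zero.mp hc).symm
    have := hstrict g hsharp (Pf f - z) (annsub _ hann _ hz) hzz
    have he : g + (Pf f - z) = f - z := by rw [hg]; abel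
    rw [he, hnorm, hinf] at this
    exact lt_irrefl _ this
  · rintro rfl
    exact ⟨hann, by simp only [LinearMap.coe_mk, AddHom.coe_mk]; rw [hinf, hg]⟩
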